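/- For every dimension n ≥ 1 and every θ > 0 there exist constants μ₀, τ₀, C, C₁, C₂ > 0 (with μ₀, τ₀, C depending only on n and C₁, C₂ depending only on n and θ) such that the following holds. Let Ω* be a normalized convex domain, w* ∈ C(closure Ω*) ∩ C²(Ω*) strictly convex with 1 − ε ≤ det D²w* ≤ 1 + ε in Ω*, w* = 0 on ∂Ω*, minimum at y₀; let 0 < h₀ ≤ μ₀ with C√h₀ ≤ 1/2, ε ≤ τ₀h₀² and √ε ≤ θ·h₀·ln(1/h₀)/(2C); let δ₀ = 0, δ_k = C(δ_{k−1}√h₀ + √ε/h₀), and let (A_k) be symmetric positive definite matrices satisfying B(0, √2(1 − δ_k)) ⊆ h₀^{−k/2}·A_k·(S_{h₀^k,w*}(y₀) − y₀) ⊆ B(0, √2(1 + δ_k)) together with the bounds (√c₁ ∏_{i=1}^{k−1}√(1 − Cδ_i))·I ≤ A_k ≤ (√c₂ ∏_{i=1}^{k−1}√(1 + Cδ_i))·I from the iteration. Then for all k ≥ 1: C₁·h₀^{θk}·I ≤ A_k ≤ C₂·h₀^{−θk/2}·I, and consequently C₂^{−1}·h₀^{θk/2}·I ≤ A_k^{−1}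 ≤ C₁^{−1}·h₀^{−θk}·I. -/

import Mathlib

open MeasureTheory Metric Set Real

noncomputable section

abbrev En (n : ℕ) : Type := EuclideanSpace ℝ (Fin n)

noncomputable def hess {n : ℕ} (w : En n → ℝ) (x : En n) : Matrix (Fin n) (Fin n) ℝ :=
  fun i j => iteratedFDeriv ℝ 2 w x ![EuclideanSpace.single i 1, EuclideanSpace.single j 1]

noncomputable def LMA {n : ℕ} (w u : En n → ℝ) (x : En n) : ℝ :=
  Matrix.trace ((hess w x).adjugate * hess u x)

def ViscSubsol {n : ℕ} (w u : En n → ℝ) (U : Set (En n)) : Prop :=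
  ∀ ψ : En n → ℝ, ContDiffOn ℝ 2 ψ U → ∀ x₀ ∈ U,
    IsLocalMaxOn (fun x => u x - ψ x) U x₀ → 0 ≤ LMA w ψ x₀

def ViscSupersol {n : ℕ} (w u : En n → ℝ) (U : Set (En n)) : Prop :=
  ∀ ψ : En n → ℝ, ContDiffOn ℝ 2 ψ U → ∀ x₀ ∈ U,
    IsLocalMinOn (fun x => u x - ψ x) U x₀ → LMA w ψ x₀ ≤ 0

def ViscSol {n : ℕ} (w u : En n → ℝ) (U : Set (En n)) : Prop :=
  ViscSubsol w u U ∧ ViscSupersol w u U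

def MASec {n : ℕ} (w : En n → ℝ) (Ω : Set (En n)) (x₀ : En n) (h : ℝ) : Set (En n) :=
  {x ∈ Ω | w x ≤ w x₀ + fderiv ℝ w x₀ (x - x₀) + h}

def MatLE {n : ℕ} (P Q : Matrix (Fin n) (Fin n) ℝ) : Prop := (Q - P).PosSemidef

def IsNormalized {n : ℕ} (Ω : Set (En n)) : Prop :=
  IsOpen Ω ∧ Convex ℝ Ω ∧ ball (0 : En n) 1 ⊆ Ω ∧ Ω ⊆ ball (0 : En n) n


open Matrix (conjTranspose)
open scoped Matrix

lemma psd_smul {m : ℕ} {M : Matrix (Fin m) (Fin m) ℝ} (hM : M.PosSemidef) {c : ℝ}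
    (hc : 0 ≤ c) : (c • M).PosSemidef := by
  have hh : (c • M).IsHermitian := by
    rw [Matrix.IsHermitian, Matrix.conjTranspose_smul, star_trivial, hM.1.eq]
  refine Matrix.PosSemidef.of_dotProduct_mulVec_nonneg hh fun x => ?_
  have := hM.dotProduct_mulVec_nonneg x
  rw [Matrix.smul_mulVec, dotProduct_smul]
  exact mul_nonneg hc this

lemma matle_trans {m : ℕ} {P Q R : Matrix (Fin m) (Fin m) ℝ}
    (h1 : MatLE P Q) (h2 : MatLE Q R) : MatLE P R := by
  have := h2.add h1
  simpa [MatLE, sub_add_sub_cancel] using this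

lemma matle_smul_one {m : ℕ} {r s : ℝ} (h : r ≤ s) :
    MatLE (r • (1 : Matrix (Fin m) (Fin m) ℝ)) (s • 1) := by
  have he : s • (1 : Matrix (Fin m) (Fin m) ℝ) - r • 1 = (s - r) • 1 := by
    rw [sub_smul]
  rw [MatLE, he]
  exact psd_smul Matrix.PosSemidef.one (by linarith)

lemma matle_inv {m : ℕ} {A : Matrix (Fin m) (Fin m) ℝ} (hA : A.PosDef) {a b : ℝ}
    (ha : 0 < a) (hb : 0 < b) (h1 : MatLE (a • 1) A) (h2 : MatLE A (b • 1)) :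
    MatLE (b⁻¹ • 1) A⁻¹ ∧ MatLE A⁻¹ (a⁻¹ • 1) := by
  set S := (open scoped MatrixOrder in CFC.sqrt A) with hSdef
  have hSS : S * S = A := (open scoped MatrixOrder in CFC.sqrt_mul_sqrt_self A hA.posSemidef.nonneg)
  have hdetS : IsUnit S.det := by
    have hd : S.det * S.det = A.det := by rw [← Matrix.det_mul, hSS]
    refine isUnit_iff_ne_zero.2 fun h => ?_
    have := hA.det_pos
    rw [← hd, h, mul_zero] at this
    exact lt_irrefl _ this
  have hSherm : Sᴴ = S := by
    have := (open scoped MatrixOrder in (CFC.sqrt_nonneg A)).1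
    rw [sub_zero] at this
    exact this
  have hTherm : (S⁻¹)ᴴ = S⁻¹ := by rw [Matrix.conjTranspose_nonsing_inv, hSherm]
  have hAinv : A⁻¹ = S⁻¹ * S⁻¹ := by rw [← hSS, Matrix.mul_inv_rev]
  have hTS : S⁻¹ * S = 1 := Matrix.nonsing_inv_mul S hdetS
  have hST : S * S⁻¹ = 1 := Matrix.mul_nonsing_inv S hdetS
  have hconj : S⁻¹ * A * S⁻¹ = 1 := by
    rw [← hSS, ← Matrix.mul_assoc, hTS, Matrix.one_mul, hST]
  have hmidb : S⁻¹ * (b • 1 - A) * S⁻¹ = b • A⁻¹ - 1 := by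
    rw [Matrix.mul_sub, Matrix.sub_mul, mul_smul_comm, Matrix.mul_one, smul_mul_assoc,
      hconj, ← hAinv]
  have hmida : S⁻¹ * (A - a • 1) * S⁻¹ = 1 - a • A⁻¹ := by
    rw [Matrix.mul_sub, Matrix.sub_mul, mul_smul_comm, Matrix.mul_one, smul_mul_assoc,
      hconj, ← hAinv]
  constructor
  · have key : A⁻¹ - b⁻¹ • 1 = S⁻¹ * (b⁻¹ • (b • 1 - A)) * (S⁻¹)ᴴ := by
      rw [hTherm, mul_smul_comm, smul_mul_assoc, hmidb, smul_sub, smul_smul,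
        inv_mul_cancel₀ hb.ne', one_smul]
    rw [MatLE, key]
    exact (psd_smul h2 (by positivity)).mul_mul_conjTranspose_same _
  · have key : a⁻¹ • (1 : Matrix (Fin m) (Fin m) ℝ) - A⁻¹ =
        S⁻¹ * (a⁻¹ • (A - a • 1)) * (S⁻¹)ᴴ := by
      rw [hTherm, mul_smul_comm, smul_mul_assoc, hmida, smul_sub, smul_smul,
        inv_mul_cancel₀ ha.ne', one_smul]
    rw [MatLE, key]
    exact (psd_smul h1 (by positivity)).mul_mul_conjTranspose_same _

lemma exp_neg_two_mul_le {x : ℝ} (h0 : 0 ≤ x) (h1 : x ≤ 1/2) :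
    Real.exp (-(2*x)) ≤ 1 - x := by
  have he : 1 + x ≤ Real.exp x := by linarith [Real.add_one_le_exp x]
  have h2 : (1 + x) ^ 2 ≤ Real.exp (2*x) := by
    have : Real.exp (2*x) = Real.exp x * Real.exp x := by
      rw [← Real.exp_add]; ring_nf
    nlinarith [Real.exp_pos x]
  have hp : (0:ℝ) < (1 + x) ^ 2 := by positivity
  have h4 : Real.exp (-(2*x)) ≤ ((1 + x) ^ 2)⁻¹ := by
    rw [Real.exp_neg]
    exact inv_anti₀ hp h2
  have h5 : ((1 + x) ^ 2)⁻¹ ≤ 1 - x := by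
    rw [inv_le_iff_one_le_mul₀ hp]
    nlinarith [mul_nonneg h0 h0, mul_nonneg (mul_nonneg h0 h0) h0]
  linarith

/-- Bounds on the normalizing matrices `A_k` from the iteration:
`C₁ h₀^{θk} I ≤ A_k ≤ C₂ h₀^{-θk/2} I` and the corresponding bounds for `A_k⁻¹`. -/
theorem iteration_matrix_bounds
    (n : ℕ) (hn : 1 ≤ n) :
    ∃ μ₀ τ₀ C : ℝ, 0 < μ₀ ∧ 0 < τ₀ ∧ 0 < C ∧
      ∀ θ : ℝ, 0 < θ → ∀ c₁ c₂ : ℝ, 0 < c₁ → 0 < c₂ →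
      ∃ C₁ C₂ : ℝ, 0 < C₁ ∧ 0 < C₂ ∧
        ∀ (Ω : Set (En n)), IsNormalized Ω →
        ∀ ε : ℝ, 0 ≤ ε →
        ∀ w : En n → ℝ, ContinuousOn w (closure Ω) → ContDiffOn ℝ 2 w Ω →
          StrictConvexOn ℝ (closure Ω) w →
          (∀ x ∈ Ω, 1 - ε ≤ (hess w x).det ∧ (hess w x).det ≤ 1 + ε) →
          (∀ x ∈ frontier Ω, w x = 0) →
        ∀ y₀ ∈ Ω, (∀ x ∈ closure Ω, w y₀ ≤ w x) →
        ∀ h₀ : ℝ, 0 < h₀ → h₀ ≤ μ₀ → C * Real.sqrt h₀ ≤ 1/2 →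
          ε ≤ τ₀ * h₀ ^ 2 → Real.sqrt ε ≤ θ * h₀ * Real.log (1/h₀) / (2 * C) →
        ∀ δ : ℕ → ℝ, δ 0 = 0 →
          (∀ k : ℕ, δ (k + 1) = C * (δ k * Real.sqrt h₀ + Real.sqrt ε / h₀)) →
        ∀ A : ℕ → Matrix (Fin n) (Fin n) ℝ,
          (∀ k : ℕ, 1 ≤ k → (A k).IsSymm ∧ (A k).PosDef ∧
            (ball (0 : En n) (Real.sqrt 2 * (1 - δ k)) ⊆
              (fun x => (Real.sqrt (h₀ ^ k))⁻¹ • Matrix.toEuclideanLin (A k) (x - y₀)) ''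
                MASec w Ω y₀ (h₀ ^ k)) ∧
            ((fun x => (Real.sqrt (h₀ ^ k))⁻¹ • Matrix.toEuclideanLin (A k) (x - y₀)) ''
                MASec w Ω y₀ (h₀ ^ k) ⊆
              ball (0 : En n) (Real.sqrt 2 * (1 + δ k))) ∧
            MatLE ((Real.sqrt c₁ * ∏ i ∈ Finset.Icc 1 (k - 1), Real.sqrt (1 - C * δ i)) •
              (1 : Matrix (Fin n) (Fin n) ℝ)) (A k) ∧
            MatLE (A k) ((Real.sqrt c₂ * ∏ i ∈ Finset.Icc 1 (k - 1),
              Real.sqrt (1 + C * δ i)) • (1 : Matrix (Fin n) (Fin n) ℝ))) →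
        ∀ k : ℕ, 1 ≤ k →
          MatLE ((C₁ * h₀ ^ (θ * k)) • (1 : Matrix (Fin n) (Fin n) ℝ)) (A k) ∧
          MatLE (A k) ((C₂ * h₀ ^ (-(θ * k) / 2)) • (1 : Matrix (Fin n) (Fin n) ℝ)) ∧
          MatLE ((C₂⁻¹ * h₀ ^ (θ * k / 2)) • (1 : Matrix (Fin n) (Fin n) ℝ)) (A k)⁻¹ ∧
          MatLE ((A k)⁻¹) ((C₁⁻¹ * h₀ ^ (-(θ * (k : ℝ)))) •
            (1 : Matrix (Fin n) (Fin n) ℝ)) := by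
  refine ⟨1/4, 1/16, 1, by norm_num, by norm_num, by norm_num, ?_⟩
  intro θ hθ c₁ c₂ hc₁ hc₂
  refine ⟨Real.sqrt c₁, Real.sqrt c₂, Real.sqrt_pos.2 hc₁, Real.sqrt_pos.2 hc₂, ?_⟩
  intro Ω hΩ ε hε w hw1 hw2 hw3 hw4 hw5 y₀ hy₀ hmin h₀ hh₀ hμ hC hτ hθε δ hδ0 hδrec A hA k hk
  -- basic scalar facts
  have hsh : Real.sqrt h₀ ≤ 1/2 := by linarith [hC]
  have hsq : Real.sqrt h₀ ^ 2 = h₀ := Real.sq_sqrt hh₀.le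
  have hh4 : h₀ ≤ 1/4 := by nlinarith [Real.sqrt_nonneg h₀]
  have hh1 : h₀ < 1 := by linarith
  set L := Real.log (1/h₀) with hLdef
  have hL0 : 0 ≤ L := Real.log_nonneg (by rw [le_div_iff₀ hh₀]; linarith)
  have hlogh : Real.log h₀ = -L := by rw [hLdef, one_div, Real.log_inv, neg_neg]
  have hEθ : Real.sqrt ε / h₀ ≤ θ * L / 2 := by
    rw [div_le_iff₀ hh₀]
    calc Real.sqrt ε ≤ θ * h₀ * L / (2 * 1) := hθε
      _ = θ * L / 2 * h₀ := by ring
  have hE4 : Real.sqrt ε / h₀ ≤ 1/4 := by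
    rw [div_le_iff₀ hh₀]
    have h1 : Real.sqrt ε ≤ h₀ / 4 := by
      rw [show (1/16 * h₀^2 : ℝ) = (h₀/4)^2 by ring] at hτ
      calc Real.sqrt ε ≤ Real.sqrt ((h₀/4)^2) := Real.sqrt_le_sqrt hτ
        _ = h₀/4 := Real.sqrt_sq (by positivity)
    linarith
  have hE0 : 0 ≤ Real.sqrt ε / h₀ := by positivity
  have hδn : ∀ m, 0 ≤ δ m ∧ δ m ≤ 2 * (Real.sqrt ε / h₀) := by
    intro m; induction m with
    | zero => rw [hδ0]; exact ⟨le_refl 0, by linarith⟩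
    | succ m ih =>
      rw [hδrec m, one_mul]
      constructor
      · have := mul_nonneg ih.1 (Real.sqrt_nonneg h₀); linarith
      · have h2 : δ m * Real.sqrt h₀ ≤ 2 * (Real.sqrt ε / h₀) * (1/2) :=
          mul_le_mul ih.2 hsh (Real.sqrt_nonneg h₀) (by linarith)
        linarith
  have hδθ : ∀ m, δ m ≤ θ * L := fun m => by linarith [(hδn m).2, hEθ]
  have hδh : ∀ m, δ m ≤ 1/2 := fun m => by linarith [(hδn m).2, hE4]
  -- factor bounds
  have hfac1 : ∀ m, h₀ ^ (θ:ℝ) ≤ Real.sqrt (1 - 1 * δ m) := by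
    intro m
    have hr : h₀ ^ (θ:ℝ) * h₀ ^ (θ:ℝ) = Real.exp (-(2*(θ*L))) := by
      rw [← Real.rpow_add hh₀, Real.rpow_def_of_pos hh₀, hlogh]; ring_nf
    have key : h₀ ^ (θ:ℝ) * h₀ ^ (θ:ℝ) ≤ 1 - 1 * δ m := by
      rw [hr, one_mul]
      calc Real.exp (-(2*(θ*L))) ≤ Real.exp (-(2 * δ m)) := by
            apply Real.exp_le_exp.2; nlinarith [hδθ m]
        _ ≤ 1 - δ m := exp_neg_two_mul_le (hδn m).1 (hδh m)
    calc h₀ ^ (θ:ℝ) = Real.sqrt (h₀ ^ (θ:ℝ) * h₀ ^ (θ:ℝ)) :=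
          (Real.sqrt_mul_self (by positivity)).symm
      _ ≤ Real.sqrt (1 - 1 * δ m) := Real.sqrt_le_sqrt key
  have hfac2 : ∀ m, Real.sqrt (1 + 1 * δ m) ≤ h₀ ^ (-θ/2 : ℝ) := by
    intro m
    have hr : h₀ ^ (-θ/2:ℝ) * h₀ ^ (-θ/2:ℝ) = Real.exp (θ*L) := by
      rw [← Real.rpow_add hh₀, Real.rpow_def_of_pos hh₀, hlogh]; ring_nf
    have key : 1 + 1 * δ m ≤ h₀ ^ (-θ/2:ℝ) * h₀ ^ (-θ/2:ℝ) := by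
      rw [hr, one_mul]
      have := Real.add_one_le_exp (θ*L)
      linarith [hδθ m]
    calc Real.sqrt (1 + 1 * δ m) ≤ Real.sqrt (h₀ ^ (-θ/2:ℝ) * h₀ ^ (-θ/2:ℝ)) :=
          Real.sqrt_le_sqrt key
      _ = h₀ ^ (-θ/2:ℝ) := Real.sqrt_mul_self (by positivity)
  -- products
  have hcard : (Finset.Icc 1 (k-1)).card = k - 1 := by rw [Nat.card_Icc]; omega
  have hkr : ((k-1:ℕ):ℝ) = (k:ℝ) - 1 := by
    rw [Nat.cast_sub hk]; norm_num
  have hk1 : (1:ℝ) ≤ (k:ℝ) := by exact_mod_cast hk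
  have hP1 : h₀ ^ (θ * (k:ℝ)) ≤ ∏ i ∈ Finset.Icc 1 (k-1), Real.sqrt (1 - 1 * δ i) := by
    calc h₀ ^ (θ * (k:ℝ)) ≤ h₀ ^ (θ * ((k:ℝ)-1)) :=
          Real.rpow_le_rpow_of_exponent_ge hh₀ hh1.le (by nlinarith)
      _ = (h₀ ^ (θ:ℝ)) ^ (k-1:ℕ) := by
          rw [Real.rpow_mul hh₀.le, ← hkr, Real.rpow_natCast]
      _ ≤ ∏ i ∈ Finset.Icc 1 (k-1), Real.sqrt (1 - 1 * δ i) := by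
          have h := Finset.prod_le_prod (s := Finset.Icc 1 (k-1))
            (f := fun _ => h₀ ^ (θ:ℝ)) (g := fun i => Real.sqrt (1 - 1 * δ i))
            (fun i _ => by positivity) (fun i _ => hfac1 i)
          simpa [Finset.prod_const, hcard] using h
  have hP2 : ∏ i ∈ Finset.Icc 1 (k-1), Real.sqrt (1 + 1 * δ i) ≤ h₀ ^ (-(θ * (k:ℝ))/2) := by
    calc ∏ i ∈ Finset.Icc 1 (k-1), Real.sqrt (1 + 1 * δ i)
        ≤ (h₀ ^ (-θ/2:ℝ)) ^ (k-1:ℕ) := by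
          have h := Finset.prod_le_prod (s := Finset.Icc 1 (k-1))
            (f := fun i => Real.sqrt (1 + 1 * δ i)) (g := fun _ => h₀ ^ (-θ/2:ℝ))
            (fun i _ => Real.sqrt_nonneg _) (fun i _ => hfac2 i)
          simpa [Finset.prod_const, hcard] using h
      _ = h₀ ^ ((-θ/2) * ((k:ℝ)-1)) := by
          rw [Real.rpow_mul hh₀.le, ← hkr, Real.rpow_natCast]
      _ ≤ h₀ ^ (-(θ * (k:ℝ))/2) :=
          Real.rpow_le_rpow_of_exponent_ge hh₀ hh1.le (by nlinarith)
  -- matrix part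
  obtain ⟨hsym, hpd, _h3, _h4, hlo, hhi⟩ := hA k hk
  have apos : 0 < Real.sqrt c₁ * ∏ i ∈ Finset.Icc 1 (k-1), Real.sqrt (1 - 1 * δ i) := by
    apply mul_pos (Real.sqrt_pos.2 hc₁)
    apply Finset.prod_pos
    intro i _
    apply Real.sqrt_pos.2
    have := hδh i; linarith
  have bpos : 0 < Real.sqrt c₂ * ∏ i ∈ Finset.Icc 1 (k-1), Real.sqrt (1 + 1 * δ i) := by
    apply mul_pos (Real.sqrt_pos.2 hc₂)
    apply Finset.prod_pos
    intro i _
    apply Real.sqrt_pos.2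
    have := (hδn i).1; linarith
  have ha : Real.sqrt c₁ * h₀ ^ (θ * (k:ℝ)) ≤
      Real.sqrt c₁ * ∏ i ∈ Finset.Icc 1 (k-1), Real.sqrt (1 - 1 * δ i) :=
    mul_le_mul_of_nonneg_left hP1 (Real.sqrt_nonneg c₁)
  have hb : Real.sqrt c₂ * ∏ i ∈ Finset.Icc 1 (k-1), Real.sqrt (1 + 1 * δ i) ≤
      Real.sqrt c₂ * h₀ ^ (-(θ * (k:ℝ))/2) :=
    mul_le_mul_of_nonneg_left hP2 (Real.sqrt_nonneg c₂)
  have hinv := matle_inv hpd apos bpos hlo hhi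
  refine ⟨matle_trans (matle_smul_one ha) hlo, matle_trans hhi (matle_smul_one hb), ?_, ?_⟩
  · refine matle_trans (matle_smul_one ?_) hinv.1
    have h1 : (Real.sqrt c₂ * h₀ ^ (-(θ * (k:ℝ))/2))⁻¹ =
        (Real.sqrt c₂)⁻¹ * h₀ ^ (θ * (k:ℝ) / 2) := by
      rw [mul_inv, ← Real.rpow_neg hh₀.le,
        show -(-(θ * (k:ℝ))/2) = θ * (k:ℝ) / 2 by ring]
    calc (Real.sqrt c₂)⁻¹ * h₀ ^ (θ * (k:ℝ) / 2)
        = (Real.sqrt c₂ * h₀ ^ (-(θ * (k:ℝ))/2))⁻¹ := h1.symm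
      _ ≤ (Real.sqrt c₂ * ∏ i ∈ Finset.Icc 1 (k-1), Real.sqrt (1 + 1 * δ i))⁻¹ :=
          inv_anti₀ bpos hb
  · refine matle_trans hinv.2 (matle_smul_one ?_)
    have h1 : (Real.sqrt c₁ * h₀ ^ (θ * (k:ℝ)))⁻¹ =
        (Real.sqrt c₁)⁻¹ * h₀ ^ (-(θ * (k:ℝ))) := by
      rw [mul_inv, ← Real.rpow_neg hh₀.le]
    calc (Real.sqrt c₁ * ∏ i ∈ Finset.Icc 1 (k-1), Real.sqrt (1 - 1 * δ i))⁻¹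
        ≤ (Real.sqrt c₁ * h₀ ^ (θ * (k:ℝ)))⁻¹ :=
          inv_anti₀ (by positivity) ha
      _ = (Real.sqrt c₁)⁻¹ * h₀ ^ (-(θ * (k:ℝ))) := h1
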